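/- Let ε > 0 and let C_1 and C_2 be two (3+ε)-clusters in X. Then C_1 ∩ C_2 = ∅, or C_1 ⊆ C_2, or C_2 ⊆ C_1. -/

import Mathlib

open Finset

/-- `Δ(x,A)` with the uniform measure: the average distance from `x` to points of `A`. -/
noncomputable def DptU {X : Type*} [MetricSpace X] (x : X) (A : Finset X) : ℝ :=
  (∑ y ∈ A, dist x y) / (A.card : ℝ)

/-- A `γ`-cluster: a nonempty set `C` with `Δ(y,C) ≥ γ·Δ(x,C)` for all `x ∈ C` and `y ∉ C`. -/
def IsCluster {X : Type*} [Fintype X] [MetricSpace X] (γ : ℝ) (C : Finset X) : Prop :=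
  C.Nonempty ∧ ∀ x ∈ C, ∀ y : X, y ∉ C → γ * DptU x C ≤ DptU y C

lemma dptU_nonneg {X : Type*} [MetricSpace X] (x : X) (A : Finset X) : 0 ≤ DptU x A :=
  div_nonneg (Finset.sum_nonneg fun _ _ => dist_nonneg) (Nat.cast_nonneg _)

lemma dptU_le {X : Type*} [MetricSpace X] (x y : X) {A : Finset X} (hA : A.Nonempty) :
    DptU x A ≤ dist x y + DptU y A := by
  have hc : (0:ℝ) < A.card := by exact_mod_cast hA.card_pos
  have hsum : ∑ a ∈ A, dist x a ≤ ∑ a ∈ A, (dist x y + dist y a) :=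
    Finset.sum_le_sum fun a _ => dist_triangle x y a
  rw [Finset.sum_add_distrib, Finset.sum_const, nsmul_eq_mul] at hsum
  rw [DptU, DptU]
  rw [div_le_iff₀ hc]
  calc ∑ a ∈ A, dist x a ≤ (A.card : ℝ) * dist x y + ∑ a ∈ A, dist y a := hsum
    _ = (dist x y + (∑ a ∈ A, dist y a) / A.card) * A.card := by field_simp

lemma dist_le_dptU {X : Type*} [MetricSpace X] (x y : X) {A : Finset X} (hA : A.Nonempty) :
    dist x y ≤ DptU x A + DptU y A := by
  have hc : (0:ℝ) < A.card := by exact_mod_cast hA.card_pos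
  have hsum : ∑ _a ∈ A, dist x y ≤ ∑ a ∈ A, (dist x a + dist a y) :=
    Finset.sum_le_sum fun a _ => dist_triangle x a y
  rw [Finset.sum_const, nsmul_eq_mul, Finset.sum_add_distrib] at hsum
  have h2 : (∑ a ∈ A, dist a y) = ∑ a ∈ A, dist y a := by
    simp [dist_comm]
  rw [h2] at hsum
  rw [DptU, DptU, ← add_div, le_div_iff₀ hc]
  linarith [hsum]

/-- Two `(3+ε)`-clusters are disjoint or nested. -/
theorem stmt_9 {X : Type*} [Fintype X] [MetricSpace X] [DecidableEq X]
    (ε : ℝ) (hε : 0 < ε) (C₁ C₂ : Finset X)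
    (h₁ : IsCluster (3 + ε) C₁) (h₂ : IsCluster (3 + ε) C₂) :
    C₁ ∩ C₂ = ∅ ∨ C₁ ⊆ C₂ ∨ C₂ ⊆ C₁ := by
  by_contra h
  push_neg at h
  obtain ⟨hne, hns1, hns2⟩ := h
  obtain ⟨z, hz⟩ := hne
  rw [Finset.mem_inter] at hz
  obtain ⟨hz1, hz2⟩ := hz
  obtain ⟨x₁, hx₁, hx₁'⟩ := Finset.not_subset.mp hns1
  obtain ⟨x₂, hx₂, hx₂'⟩ := Finset.not_subset.mp hns2
  set γ := 3 + ε with hγ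
  set a := DptU z C₁
  set b := DptU z C₂
  set u := dist x₁ z
  set v := dist x₂ z
  have ha : 0 ≤ a := dptU_nonneg _ _
  have hb : 0 ≤ b := dptU_nonneg _ _
  have hu : 0 < u := dist_pos.mpr (fun hEq => hx₁' (hEq ▸ hz2))
  -- u ≥ (γ-1) b
  have I1 : γ * b ≤ u + b :=
    le_trans (h₂.2 z hz2 x₁ hx₁') (dptU_le x₁ z h₂.1)
  have I2 : γ * a ≤ v + a :=
    le_trans (h₁.2 z hz1 x₂ hx₂') (dptU_le x₂ z h₁.1)
  -- γ u ≤ v + a + γ a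
  have J1 : γ * u ≤ v + a + γ * a := by
    have e1 : u ≤ DptU x₁ C₁ + a := dist_le_dptU x₁ z h₁.1
    have e2 : γ * DptU x₁ C₁ ≤ DptU x₂ C₁ := h₁.2 x₁ hx₁ x₂ hx₂'
    have e3 : DptU x₂ C₁ ≤ v + a := dptU_le x₂ z h₁.1
    nlinarith [hε]
  have J2 : γ * v ≤ u + b + γ * b := by
    have e1 : v ≤ DptU x₂ C₂ + b := dist_le_dptU x₂ z h₂.1
    have e2 : γ * DptU x₂ C₂ ≤ DptU x₁ C₂ := h₂.2 x₂ hx₂ x₁ hx₁'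
    have e3 : DptU x₁ C₂ ≤ u + b := dptU_le x₁ z h₂.1
    nlinarith [hε]
  have hv : 0 ≤ v := dist_nonneg
  have K1 : (2+ε)*(u+v) ≤ (4+ε)*(a+b) := by
    rw [hγ] at J1 J2; nlinarith [J1, J2]
  have K2 : (2+ε)*(a+b) ≤ u+v := by
    rw [hγ] at I1 I2; linarith
  have K3 : (2+ε)*((2+ε)*(a+b)) ≤ (2+ε)*(u+v) :=
    mul_le_mul_of_nonneg_left K2 (by linarith)
  have hs : 0 < a + b := by nlinarith [K1, hu, hv]
  nlinarith [K1, K3, mul_pos hε hs]
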